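/- arXiv:2204.01213 — 9 statements merged into one kernel-verified Lean document; each statement's English description precedes it below -/
import Mathlib

section
/- Let Γ be a finite simple graph on n vertices with vertex set {1,...,n}, let e_1,...,e_n be the standard basis of ℝ^n, and let μ be the probability measure on ℝ^n given by μ = (Σ_{i=1}^n δ_{e_i} + Σ_{(i,j) ∈ edges(Γ)} 2·δ_{e_i+e_j}) / (n + 2·|edges(Γ)|), where δ_v denotes the Dirac measure at v. Then Γ admits a nontrivial graph automorphism if and only if there exists a nontrivial linear symmetry of μ, i.e., a linear map A : ℝ^n → ℝ^n with A ≠ id such that the pushforward measure A_*μ equals μ. -/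
open MeasureTheory
open scoped ENNReal

/-- The probability measure on `ℝ^n` encoding a finite simple graph `Γ` on vertices
`{1,…,n}`: atoms of relative mass `1` at each basis vector `e_i`, and of relative
mass `2` at `e_i + e_j` for each edge `(i,j)`, normalized by `n + 2·|edges(Γ)|`. -/
noncomputable def graphMeasure (n : ℕ) (Γ : SimpleGraph (Fin n)) [DecidableRel Γ.Adj] :
    Measure (Fin n → ℝ) :=
  (((n : ℝ≥0∞) + 2 * Γ.edgeFinset.card)⁻¹) •
    ((∑ i : Fin n, Measure.dirac (Pi.single i 1)) +
      ∑ s ∈ Γ.edgeFinset, (2 : ℝ≥0∞) • Measure.dirac (fun j => if j ∈ s then (1 : ℝ) else 0))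

namespace GraphMeasureAux

variable {n : ℕ}

/-- basis vector -/
noncomputable def ee (i : Fin n) : Fin n → ℝ := Pi.single i 1

/-- edge vector -/
noncomputable def vv (s : Sym2 (Fin n)) : Fin n → ℝ := fun j => if j ∈ s then 1 else 0

lemma ee_inj : Function.Injective (ee (n := n)) := by
  intro i j h
  by_contra hne
  have := congrFun h i
  simp [ee, Pi.single_apply, hne] at this

lemma vv_inj : Function.Injective (vv (n := n)) := by
  intro s t h
  refine Sym2.ext fun j => ?_
  have := congrFun h j
  by_cases hs : j ∈ s <;> by_cases ht : j ∈ t <;> simp_all [vv]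

lemma ee_ne_vv {i : Fin n} {s : Sym2 (Fin n)} (hd : ¬ s.IsDiag) : ee i ≠ vv s := by
  induction s using Sym2.ind with
  | _ a b =>
    have hab : a ≠ b := by simpa [Sym2.isDiag_iff_proj_eq] using hd
    intro h
    rcases ne_or_eq a i with hai | rfl
    · have := congrFun h a
      simp [ee, vv, Pi.single_apply, hai] at this
    · have := congrFun h b
      simp [ee, vv, Pi.single_apply, hab, Ne.symm hab] at this

lemma vv_eq_add {a b : Fin n} (hab : a ≠ b) : vv s(a, b) = ee a + ee b := by
  funext j
  rcases eq_or_ne j a with rfl | hja <;> rcases eq_or_ne j b with rfl | hjb <;>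
    simp_all [vv, ee, Pi.single_apply, Sym2.mem_iff]

lemma map_finset_sum {α β ι : Type*} [MeasurableSpace α] [MeasurableSpace β] {f : α → β}
    (hf : Measurable f) (E : Finset ι) (μ : ι → Measure α) :
    Measure.map f (∑ i ∈ E, μ i) = ∑ i ∈ E, Measure.map f (μ i) := by
  classical
  induction E using Finset.induction_on with
  | empty => simp
  | insert _ _ h ih => rw [Finset.sum_insert h, Finset.sum_insert h, Measure.map_add _ _ hf, ih]

lemma map_nu {A : (Fin n → ℝ) → (Fin n → ℝ)} (hA : Measurable A) (E : Finset (Sym2 (Fin n))) :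
    Measure.map A ((∑ i : Fin n, Measure.dirac (ee i)) +
      ∑ s ∈ E, (2 : ℝ≥0∞) • Measure.dirac (vv s)) =
    (∑ i : Fin n, Measure.dirac (A (ee i))) +
      ∑ s ∈ E, (2 : ℝ≥0∞) • Measure.dirac (A (vv s)) := by
  rw [Measure.map_add _ _ hA, map_finset_sum hA, map_finset_sum hA]
  simp [Measure.map_smul, Measure.map_dirac' hA]

lemma nu_apply_singleton (f : Fin n → (Fin n → ℝ)) (E : Finset (Sym2 (Fin n)))
    (g : Sym2 (Fin n) → (Fin n → ℝ)) (y : Fin n → ℝ) :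
    ((∑ i : Fin n, Measure.dirac (f i)) + ∑ s ∈ E, (2 : ℝ≥0∞) • Measure.dirac (g s))
        ({y} : Set (Fin n → ℝ))
      = ((Finset.univ.filter (fun i => f i = y)).card : ℝ≥0∞)
        + 2 * ((E.filter (fun s => g s = y)).card : ℝ≥0∞) := by
  classical
  rw [Measure.add_apply, Measure.finset_sum_apply, Measure.finset_sum_apply]
  simp only [Measure.smul_apply, Measure.dirac_apply, smul_eq_mul,
    Set.indicator_apply, Set.mem_singleton_iff, Pi.one_apply]
  rw [Finset.sum_boole, ← Finset.mul_sum, Finset.sum_boole]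

variable {Γ : SimpleGraph (Fin n)} [DecidableRel Γ.Adj]

lemma graphMeasure_eq : graphMeasure n Γ =
    (((n : ℝ≥0∞) + 2 * Γ.edgeFinset.card)⁻¹) •
      ((∑ i : Fin n, Measure.dirac (ee i)) +
        ∑ s ∈ Γ.edgeFinset, (2 : ℝ≥0∞) • Measure.dirac (vv s)) := rfl

lemma not_isDiag_of_mem {s : Sym2 (Fin n)} (hs : s ∈ Γ.edgeFinset) : ¬ s.IsDiag :=
  Γ.not_isDiag_of_mem_edgeSet (SimpleGraph.mem_edgeFinset.mp hs)

/-- Forward direction. -/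
lemma forward (σ : Γ ≃g Γ) (hσ : σ ≠ SimpleGraph.Iso.refl) :
    ∃ A : (Fin n → ℝ) →ₗ[ℝ] (Fin n → ℝ), A ≠ LinearMap.id ∧
      Measure.map A (graphMeasure n Γ) = graphMeasure n Γ := by
  classical
  let τ : Fin n ≃ Fin n := σ.toEquiv
  let A : (Fin n → ℝ) →ₗ[ℝ] (Fin n → ℝ) := LinearMap.funLeft ℝ ℝ τ.symm
  have hAe : ∀ i, A (ee i) = ee (τ i) := by
    intro i
    funext j
    simp only [A, LinearMap.funLeft_apply, ee, Pi.single_apply]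
    by_cases h : j = τ i
    · subst h; simp
    · rw [if_neg (by simpa [Equiv.symm_apply_eq] using h), if_neg h]
  have hAv : ∀ s, A (vv s) = vv (Sym2.map τ s) := by
    intro s
    funext j
    simp only [A, LinearMap.funLeft_apply, vv]
    have hmem : j ∈ Sym2.map (⇑τ) s ↔ τ.symm j ∈ s := by
      rw [Sym2.mem_map]
      constructor
      · rintro ⟨a, ha, rfl⟩; simpa using ha
      · intro h; exact ⟨τ.symm j, h, by simp⟩
    simp [hmem]
  have hAm : Measurable A := A.continuous_of_finiteDimensional.measurable
  have hτne : ∃ i, τ i ≠ i := by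
    by_contra h
    push_neg at h
    exact hσ (RelIso.ext fun x => h x)
  obtain ⟨i, hi⟩ := hτne
  refine ⟨A, ?_, ?_⟩
  · intro hAid
    apply hi
    apply ee_inj
    rw [← hAe i, hAid, LinearMap.id_apply]
  · rw [graphMeasure_eq, Measure.map_smul, map_nu hAm]
    congr 1
    congr 1
    · simp_rw [hAe]
      exact Equiv.sum_comp τ (fun i => Measure.dirac (ee i))
    · simp_rw [hAv]
      refine Finset.sum_nbij' (fun s => Sym2.map τ s) (fun s => Sym2.map τ.symm s)
        ?_ ?_ ?_ ?_ ?_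
      · intro s hs
        rw [SimpleGraph.mem_edgeFinset] at hs ⊢
        have : ⇑τ = ⇑σ := rfl
        rw [this]
        exact σ.map_mem_edgeSet_iff.mpr hs
      · intro s hs
        rw [SimpleGraph.mem_edgeFinset] at hs ⊢
        have : ⇑τ.symm = ⇑σ.symm := rfl
        rw [this]
        exact σ.symm.map_mem_edgeSet_iff.mpr hs
      · intro s _
        show Sym2.map (⇑τ.symm) (Sym2.map (⇑τ) s) = s
        rw [Sym2.map_map, Equiv.symm_comp_self, Sym2.map_id, id_eq]
      · intro s _
        show Sym2.map (⇑τ) (Sym2.map (⇑τ.symm) s) = s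
        rw [Sym2.map_map, Equiv.self_comp_symm, Sym2.map_id, id_eq]
      · intro s _
        rfl

/-- Backward direction. -/
lemma backward (A : (Fin n → ℝ) →ₗ[ℝ] (Fin n → ℝ)) (hA : A ≠ LinearMap.id)
    (hmap : Measure.map A (graphMeasure n Γ) = graphMeasure n Γ) :
    ∃ σ : Γ ≃g Γ, σ ≠ SimpleGraph.Iso.refl := by
  classical
  rcases Nat.eq_zero_or_pos n with hn | hn
  · subst hn
    exact absurd (LinearMap.ext fun x => funext fun j => j.elim0) hA
  have hN0 : ((n : ℝ≥0∞) + 2 * Γ.edgeFinset.card) ≠ 0 := by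
    intro h
    rw [add_eq_zero] at h
    exact (Nat.cast_ne_zero.mpr hn.ne').elim (by exact_mod_cast h.1)
  have hNtop : ((n : ℝ≥0∞) + 2 * Γ.edgeFinset.card) ≠ ∞ :=
    ENNReal.add_ne_top.mpr ⟨ENNReal.natCast_ne_top n,
      ENNReal.mul_ne_top (by norm_num) (ENNReal.natCast_ne_top _)⟩
  have hAm : Measurable A := A.continuous_of_finiteDimensional.measurable
  have hνmap : Measure.map A ((∑ i : Fin n, Measure.dirac (ee i)) +
        ∑ s ∈ Γ.edgeFinset, (2 : ℝ≥0∞) • Measure.dirac (vv s))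
      = (∑ i : Fin n, Measure.dirac (ee i)) +
        ∑ s ∈ Γ.edgeFinset, (2 : ℝ≥0∞) • Measure.dirac (vv s) := by
    rw [graphMeasure_eq (Γ := Γ), Measure.map_smul] at hmap
    have h2 := congrArg
      (fun m : Measure (Fin n → ℝ) => ((n : ℝ≥0∞) + 2 * Γ.edgeFinset.card) • m) hmap
    simp only [smul_smul, ENNReal.mul_inv_cancel hN0 hNtop, one_smul] at h2
    exact h2
  have key : ∀ y : Fin n → ℝ,
      (Finset.univ.filter (fun i => A (ee i) = y)).card
        + 2 * (Γ.edgeFinset.filter (fun s => A (vv s) = y)).card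
      = (Finset.univ.filter (fun i => ee i = y)).card
        + 2 * (Γ.edgeFinset.filter (fun s => vv s = y)).card := by
    intro y
    have h1 := congrArg (fun m : Measure (Fin n → ℝ) => m {y}) hνmap
    rw [map_nu hAm] at h1
    rw [nu_apply_singleton, nu_apply_singleton] at h1
    exact_mod_cast h1
  -- vertex atoms
  have hb1 : ∀ j : Fin n, (Finset.univ.filter (fun i => ee i = ee j)).card = 1 := by
    intro j
    rw [Finset.card_eq_one]
    exact ⟨j, by ext i; simp [Finset.mem_filter, ee_inj.eq_iff]⟩
  have hb2 : ∀ j : Fin n, (Γ.edgeFinset.filter (fun s => vv s = ee j)).card = 0 := by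
    intro j
    rw [Finset.card_eq_zero, Finset.filter_eq_empty_iff]
    exact fun s hs h => ee_ne_vv (not_isDiag_of_mem hs) h.symm
  have ha : ∀ j : Fin n, (Finset.univ.filter (fun i => A (ee i) = ee j)).card = 1 := by
    intro j
    have := key (ee j)
    rw [hb1 j, hb2 j] at this
    omega
  have hgex : ∀ j : Fin n, ∃ i, Finset.univ.filter (fun i => A (ee i) = ee j) = {i} :=
    fun j => Finset.card_eq_one.mp (ha j)
  choose g hg using hgex
  have hgspec : ∀ (j i : Fin n), A (ee i) = ee j ↔ i = g j := by
    intro j i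
    constructor
    · intro h
      have hm : i ∈ Finset.univ.filter (fun i => A (ee i) = ee j) := by
        simp [Finset.mem_filter, h]
      rw [hg j] at hm
      simpa using hm
    · rintro rfl
      have hm : g j ∈ ({g j} : Finset (Fin n)) := Finset.mem_singleton_self _
      rw [← hg j] at hm
      simpa [Finset.mem_filter] using hm
  have hginj : Function.Injective g := by
    intro j j' h
    have h1 : A (ee (g j)) = ee j := (hgspec j (g j)).mpr rfl
    have h2 : A (ee (g j')) = ee j' := (hgspec j' (g j')).mpr rfl
    rw [← h] at h2
    exact ee_inj (h1.symm.trans h2)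
  let π : Fin n ≃ Fin n := (Equiv.ofBijective g (Finite.injective_iff_bijective.mp hginj)).symm
  have hπ : ∀ i, A (ee i) = ee (π i) := by
    intro i
    have hg' : g (π i) = i := (Equiv.ofBijective g _).apply_symm_apply i
    exact (hgspec (π i) i).mpr hg'.symm
  -- edge atoms
  have hc1 : ∀ t ∈ Γ.edgeFinset, (Γ.edgeFinset.filter (fun s => vv s = vv t)).card = 1 := by
    intro t ht
    rw [Finset.card_eq_one]
    refine ⟨t, ?_⟩
    ext s
    simp only [Finset.mem_filter, Finset.mem_singleton, vv_inj.eq_iff]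
    exact ⟨fun h => h.2, fun h => ⟨h ▸ ht, h⟩⟩
  have hc0 : ∀ t ∈ Γ.edgeFinset,
      (Finset.univ.filter (fun i => A (ee i) = vv t)).card = 0 := by
    intro t ht
    rw [Finset.card_eq_zero, Finset.filter_eq_empty_iff]
    intro i _
    rw [hπ i]
    exact ee_ne_vv (not_isDiag_of_mem ht)
  have hvt1 : ∀ t ∈ Γ.edgeFinset,
      (Finset.univ.filter (fun i => ee i = vv t)).card = 0 := by
    intro t ht
    rw [Finset.card_eq_zero, Finset.filter_eq_empty_iff]
    intro i _
    exact ee_ne_vv (not_isDiag_of_mem ht)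
  have hEcard : ∀ t ∈ Γ.edgeFinset,
      (Γ.edgeFinset.filter (fun s => A (vv s) = vv t)).card = 1 := by
    intro t ht
    have := key (vv t)
    rw [hc0 t ht, hvt1 t ht, hc1 t ht] at this
    omega
  have hGex : ∀ t : {x // x ∈ Γ.edgeFinset},
      ∃ s, Γ.edgeFinset.filter (fun s => A (vv s) = vv t.1) = {s} :=
    fun t => Finset.card_eq_one.mp (hEcard t.1 t.2)
  choose G hG using hGex
  have hGmem : ∀ t, G t ∈ Γ.edgeFinset ∧ A (vv (G t)) = vv t.1 := by
    intro t
    have hm : G t ∈ Γ.edgeFinset.filter (fun s => A (vv s) = vv t.1) := by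
      rw [hG t]; exact Finset.mem_singleton_self _
    simpa [Finset.mem_filter] using hm
  let Gm : {x // x ∈ Γ.edgeFinset} → {x // x ∈ Γ.edgeFinset} := fun t => ⟨G t, (hGmem t).1⟩
  have hGinj : Function.Injective Gm := by
    intro t t' h
    have h1 := (hGmem t).2
    have h2 := (hGmem t').2
    have hGG : G t = G t' := congrArg Subtype.val h
    rw [← hGG] at h2
    exact Subtype.ext (vv_inj (h1.symm.trans h2))
  have hGsurj : Function.Surjective Gm := Finite.surjective_of_injective hGinj
  have hedge : ∀ s ∈ Γ.edgeFinset, ∃ t ∈ Γ.edgeFinset, A (vv s) = vv t := by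
    intro s hs
    obtain ⟨t, ht⟩ := hGsurj ⟨s, hs⟩
    refine ⟨t.1, t.2, ?_⟩
    have h2 := (hGmem t).2
    have hGs : G t = s := congrArg Subtype.val ht
    rw [hGs] at h2
    exact h2
  -- π is an automorphism
  have hadj : ∀ a b, Γ.Adj a b → Γ.Adj (π a) (π b) := by
    intro a b hab
    have hne : a ≠ b := hab.ne
    have hsE : s(a, b) ∈ Γ.edgeFinset := by
      rw [SimpleGraph.mem_edgeFinset, SimpleGraph.mem_edgeSet]; exact hab
    obtain ⟨t, htE, hAt⟩ := hedge _ hsE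
    have h1 : A (vv s(a, b)) = vv s(π a, π b) := by
      rw [vv_eq_add hne, map_add, hπ, hπ,
        ← vv_eq_add (fun h => hne (π.injective h))]
    have h2 : s(π a, π b) = t := vv_inj (h1.symm.trans hAt)
    have h3 : s(π a, π b) ∈ Γ.edgeFinset := h2 ▸ htE
    rw [SimpleGraph.mem_edgeFinset, SimpleGraph.mem_edgeSet] at h3
    exact h3
  have himage : Γ.edgeFinset.image (Sym2.map π) = Γ.edgeFinset := by
    apply Finset.eq_of_subset_of_card_le
    · intro t ht
      obtain ⟨s, hs, rfl⟩ := Finset.mem_image.mp ht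
      induction s using Sym2.ind with
      | _ a b =>
        rw [Sym2.map_pair_eq, SimpleGraph.mem_edgeFinset, SimpleGraph.mem_edgeSet]
        rw [SimpleGraph.mem_edgeFinset, SimpleGraph.mem_edgeSet] at hs
        exact hadj a b hs
    · rw [Finset.card_image_of_injective _ (Sym2.map.injective π.injective)]
  have hadj' : ∀ a b, Γ.Adj (π a) (π b) → Γ.Adj a b := by
    intro a b h
    have hmem : s(π a, π b) ∈ Γ.edgeFinset := by
      rw [SimpleGraph.mem_edgeFinset, SimpleGraph.mem_edgeSet]; exact h
    rw [← himage] at hmem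
    obtain ⟨s, hs, hmapeq⟩ := Finset.mem_image.mp hmem
    have hseq : s = s(a, b) :=
      Sym2.map.injective π.injective (by rw [hmapeq, Sym2.map_pair_eq])
    rw [hseq, SimpleGraph.mem_edgeFinset, SimpleGraph.mem_edgeSet] at hs
    exact hs
  refine ⟨⟨π, fun {a b} => ⟨hadj' a b, hadj a b⟩⟩, ?_⟩
  intro h
  apply hA
  have hfix : ∀ i, π i = i := by
    intro i
    have := congrArg (fun f : Γ ≃g Γ => f i) h
    simpa using this
  apply (Pi.basisFun ℝ (Fin n)).ext
  intro i
  have hπi := hπ i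
  rw [hfix i] at hπi
  simpa [ee, Pi.basisFun_apply] using hπi

end GraphMeasureAux

/-- The graph `Γ` admits a nontrivial automorphism if and only if the encoding measure
`graphMeasure n Γ` admits a nontrivial linear symmetry. -/
theorem graph_automorphism_iff_linear_symmetry (n : ℕ) (Γ : SimpleGraph (Fin n))
    [DecidableRel Γ.Adj] :
    (∃ σ : Γ ≃g Γ, σ ≠ SimpleGraph.Iso.refl) ↔
      (∃ A : (Fin n → ℝ) →ₗ[ℝ] (Fin n → ℝ), A ≠ LinearMap.id ∧
        Measure.map A (graphMeasure n Γ) = graphMeasure n Γ) := by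
  constructor
  · rintro ⟨σ, hσ⟩
    exact GraphMeasureAux.forward σ hσ
  · rintro ⟨A, hA, hmap⟩
    exact GraphMeasureAux.backward A hA hmap
end

section
/- Let Γ be a finite simple graph on n vertices with vertex set {1,...,n}, let e_1,...,e_n be the standard basis of ℝ^n, and let μ be the probability measure on ℝ^n given by μ = (Σ_{i=1}^n δ_{e_i} + Σ_{(i,j) ∈ edges(Γ)} 2·δ_{e_i+e_j}) / (n + 2·|edges(Γ)|), where δ_v denotes the Dirac measure at v. Then every linear map A : ℝ^n → ℝ^n with A_*μ = μ sends basis vectors to basis vectors via a graph automorphism: there exists an automorphism σ of Γ such that A(e_i) = e_{σ(i)} for all i. -/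
open MeasureTheory
open scoped ENNReal

section aux
variable {n : ℕ}

private lemma E_inj : Function.Injective (fun i : Fin n => (Pi.single i (1:ℝ))) := by
  intro i j h
  by_contra hne
  have := congrFun h i
  simp [Pi.single_apply, hne] at this

private lemma V_inj :
    Function.Injective (fun s : Sym2 (Fin n) => (fun j => if j ∈ s then (1:ℝ) else 0)) := by
  intro s t h
  apply Sym2.ext
  intro x
  have := congrFun h x
  by_cases hs : x ∈ s <;> by_cases ht : x ∈ t <;> simp [hs, ht] at this ⊢

private lemma E_ne_V {s : Sym2 (Fin n)} (hs : ¬ s.IsDiag) (i : Fin n) :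
    (Pi.single i (1:ℝ)) ≠ (fun j => if j ∈ s then (1:ℝ) else 0) := by
  induction s using Sym2.ind with
  | _ a b =>
    intro h
    have ha := congrFun h a
    have hb := congrFun h b
    simp [Pi.single_apply, Sym2.mem_iff] at ha hb
    exact hs (by simp [Sym2.mk_isDiag_iff, ha, hb])

private lemma sum_single {i j : Fin n} (hij : i ≠ j) :
    (Pi.single i (1:ℝ)) + (Pi.single j 1)
      = fun k => if k ∈ s(i, j) then (1:ℝ) else 0 := by
  funext k
  by_cases h1 : k = i
  · subst h1
    simp [Pi.single_apply, hij, Ne.symm hij]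
  · by_cases h2 : k = j
    · subst h2
      simp [Pi.single_apply, h1, Ne.symm hij]
    · simp [Pi.single_apply, h1, h2]

end aux

/-- Every linear symmetry of the encoding measure of a graph `Γ` sends basis vectors to
basis vectors via a graph automorphism. -/
theorem linear_symmetry_is_graph_automorphism (n : ℕ) (Γ : SimpleGraph (Fin n))
    [DecidableRel Γ.Adj] (A : (Fin n → ℝ) →ₗ[ℝ] (Fin n → ℝ))
    (hA : Measure.map A (graphMeasure n Γ) = graphMeasure n Γ) :
    ∃ σ : Γ ≃g Γ, ∀ i : Fin n, A (Pi.single i 1) = Pi.single (σ i) 1 := by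
  classical
  rcases Nat.eq_zero_or_pos n with hn | hn
  · subst hn
    exact ⟨SimpleGraph.Iso.refl, fun i => i.elim0⟩
  have hAmeas : Measurable A := A.continuous_of_finiteDimensional.measurable
  set c : ℝ≥0∞ := (n : ℝ≥0∞) + 2 * Γ.edgeFinset.card with hc
  have hc0 : c ≠ 0 := by
    have hn' : (n : ℝ≥0∞) ≠ 0 := by exact_mod_cast hn.ne'
    intro h
    rw [hc, add_eq_zero] at h
    exact hn' h.1
  have hctop : c ≠ ⊤ := by
    rw [hc]
    exact ENNReal.add_ne_top.mpr ⟨ENNReal.natCast_ne_top _,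
      ENNReal.mul_ne_top (by simp) (ENNReal.natCast_ne_top _)⟩
  -- the key counting identity coming from the measure symmetry
  have key : ∀ p : Fin n → ℝ,
      (Finset.univ.filter (fun i => A (Pi.single i 1) = p)).card
        + 2 * (Γ.edgeFinset.filter
            (fun s => A (fun j => if j ∈ s then (1:ℝ) else 0) = p)).card
      = (Finset.univ.filter (fun i => (Pi.single i (1:ℝ)) = p)).card
        + 2 * (Γ.edgeFinset.filter
            (fun s => (fun j => if j ∈ s then (1:ℝ) else 0) = p)).card := by
    intro p
    have eval : ∀ (S : Set (Fin n → ℝ)), MeasurableSet S →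
        (((∑ i : Fin n, Measure.dirac (Pi.single i (1:ℝ))) +
          ∑ s ∈ Γ.edgeFinset,
            (2:ℝ≥0∞) • Measure.dirac (fun j => if j ∈ s then (1:ℝ) else 0)) S)
        = ((Finset.univ.filter (fun i => (Pi.single i (1:ℝ)) ∈ S)).card : ℝ≥0∞)
          + 2 * ((Γ.edgeFinset.filter
              (fun s => (fun j => if j ∈ s then (1:ℝ) else 0) ∈ S)).card : ℝ≥0∞) := by
      intro S hSm
      rw [Measure.add_apply, Measure.finset_sum_apply, Measure.finset_sum_apply]
      simp only [Measure.smul_apply, smul_eq_mul,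
        Measure.dirac_apply' _ hSm, Set.indicator_apply, Pi.one_apply]
      rw [Finset.sum_boole, ← Finset.mul_sum, Finset.sum_boole]
    have h1 := congrArg (fun μ : Measure (Fin n → ℝ) => μ {p}) hA
    simp only [graphMeasure] at h1
    rw [← hc] at h1
    rw [Measure.map_smul, Measure.smul_apply, Measure.smul_apply, smul_eq_mul, smul_eq_mul,
      Measure.map_apply hAmeas (measurableSet_singleton p),
      eval _ (hAmeas (measurableSet_singleton p)),
      eval _ (measurableSet_singleton p)] at h1
    simp only [Set.mem_preimage, Set.mem_singleton_iff] at h1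
    have h2 := congrArg (fun x => c * x) h1
    simp only [← mul_assoc, ENNReal.mul_inv_cancel hc0 hctop, one_mul] at h2
    exact_mod_cast h2
  have hndiag : ∀ s ∈ Γ.edgeFinset, ¬ s.IsDiag := fun s hs =>
    Γ.not_isDiag_of_mem_edgeSet (SimpleGraph.mem_edgeFinset.mp hs)
  -- counts at a basis vector
  have a0_basis : ∀ j : Fin n,
      (Finset.univ.filter (fun i => (Pi.single i 1 : Fin n → ℝ) = Pi.single j 1)).card = 1 := by
    intro j
    rw [Finset.card_eq_one]
    refine ⟨j, ?_⟩
    ext i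
    simp only [Finset.mem_filter, Finset.mem_univ, true_and, Finset.mem_singleton]
    exact ⟨fun h => E_inj h, fun h => by rw [h]⟩
  have b0_basis : ∀ j : Fin n,
      (Γ.edgeFinset.filter
        (fun s => (fun k => if k ∈ s then (1:ℝ) else 0) = Pi.single j 1)).card = 0 := by
    intro j
    rw [Finset.card_eq_zero, Finset.filter_eq_empty_iff]
    intro s hs h
    exact E_ne_V (hndiag s hs) j h.symm
  -- counts at an edge vector
  have b0_edge : ∀ t ∈ Γ.edgeFinset,
      (Γ.edgeFinset.filter
        (fun s => (fun k => if k ∈ s then (1:ℝ) else 0)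
          = (fun k => if k ∈ t then (1:ℝ) else 0))).card = 1 := by
    intro t ht
    rw [Finset.card_eq_one]
    refine ⟨t, ?_⟩
    ext s
    simp only [Finset.mem_filter, Finset.mem_singleton]
    exact ⟨fun h => V_inj h.2, fun h => ⟨h ▸ ht, by rw [h]⟩⟩
  have a0_edge : ∀ t ∈ Γ.edgeFinset,
      (Finset.univ.filter
        (fun i => (Pi.single i (1:ℝ)) = (fun k => if k ∈ t then (1:ℝ) else 0))).card = 0 := by
    intro t ht
    rw [Finset.card_eq_zero, Finset.filter_eq_empty_iff]
    intro i _ h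
    exact E_ne_V (hndiag t ht) i h
  -- Step 1: for each basis vector there is a unique preimage basis vector
  have step1 : ∀ j : Fin n,
      (Finset.univ.filter (fun i => A (Pi.single i 1) = Pi.single j 1)).card = 1 := by
    intro j
    have := key (Pi.single j 1)
    rw [a0_basis j, b0_basis j] at this
    omega
  have hex : ∀ j : Fin n, ∃ i,
      Finset.univ.filter (fun i => A (Pi.single i 1) = Pi.single j 1) = {i} :=
    fun j => Finset.card_eq_one.mp (step1 j)
  choose g hg using hex
  have hAg : ∀ j, A (Pi.single (g j) 1) = Pi.single j 1 := by
    intro j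
    have : g j ∈ Finset.univ.filter (fun i => A (Pi.single i 1) = Pi.single j 1) := by
      rw [hg j]; exact Finset.mem_singleton_self _
    exact (Finset.mem_filter.mp this).2
  have ginj : Function.Injective g := by
    intro j k h
    have : (Pi.single j 1 : Fin n → ℝ) = Pi.single k 1 := by
      rw [← hAg j, ← hAg k, h]
    exact E_inj this
  have hgbij : Function.Bijective g := Finite.injective_iff_bijective.mp ginj
  let σ0 : Fin n ≃ Fin n := (Equiv.ofBijective g hgbij).symm
  have hσ0 : ∀ i, A (Pi.single i 1) = Pi.single (σ0 i) 1 := by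
    intro i
    have hgi : g (σ0 i) = i := (Equiv.ofBijective g hgbij).apply_symm_apply i
    have := hAg (σ0 i)
    rwa [hgi] at this
  -- A maps the edge vector for s(i,j) to the edge vector for s(σ0 i, σ0 j)
  have hAedge : ∀ i j : Fin n, i ≠ j →
      A (fun k => if k ∈ s(i, j) then (1:ℝ) else 0)
        = fun k => if k ∈ s(σ0 i, σ0 j) then (1:ℝ) else 0 := by
    intro i j hij
    have hσne : σ0 i ≠ σ0 j := fun h => hij (σ0.injective h)
    rw [← sum_single hij, map_add, hσ0 i, hσ0 j, sum_single hσne]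
  -- forward direction: adjacency is preserved
  have fwd : ∀ i j : Fin n, Γ.Adj i j → Γ.Adj (σ0 i) (σ0 j) := by
    intro i j hadj
    have hij : i ≠ j := hadj.ne
    have hσne : σ0 i ≠ σ0 j := fun h => hij (σ0.injective h)
    set p : Fin n → ℝ := fun k => if k ∈ s(σ0 i, σ0 j) then (1:ℝ) else 0 with hp
    have hkey := key p
    have ha0 : (Finset.univ.filter (fun i => (Pi.single i (1:ℝ)) = p)).card = 0 := by
      rw [Finset.card_eq_zero, Finset.filter_eq_empty_iff]
      intro k _ h
      exact E_ne_V (by simp [Sym2.mk_isDiag_iff, hσne]) k h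
    have hbA : 0 < (Γ.edgeFinset.filter
        (fun s => A (fun k => if k ∈ s then (1:ℝ) else 0) = p)).card := by
      apply Finset.card_pos.mpr
      exact ⟨s(i, j), Finset.mem_filter.mpr
        ⟨SimpleGraph.mem_edgeFinset.mpr ((SimpleGraph.mem_edgeSet Γ).mpr hadj),
          hAedge i j hij⟩⟩
    have hb0 : 0 < (Γ.edgeFinset.filter
        (fun s => (fun k => if k ∈ s then (1:ℝ) else 0) = p)).card := by omega
    obtain ⟨t, ht⟩ := Finset.card_pos.mp hb0
    have htmem := (Finset.mem_filter.mp ht).1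
    have hteq : t = s(σ0 i, σ0 j) := V_inj (Finset.mem_filter.mp ht).2
    rw [hteq] at htmem
    exact (SimpleGraph.mem_edgeSet Γ).mp (SimpleGraph.mem_edgeFinset.mp htmem)
  -- reverse direction
  have rev : ∀ i j : Fin n, Γ.Adj (σ0 i) (σ0 j) → Γ.Adj i j := by
    intro i j hadj
    have hσne : σ0 i ≠ σ0 j := hadj.ne
    have hij : i ≠ j := fun h => hσne (by rw [h])
    set p : Fin n → ℝ := fun k => if k ∈ s(σ0 i, σ0 j) then (1:ℝ) else 0 with hp
    have hpmem : s(σ0 i, σ0 j) ∈ Γ.edgeFinset :=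
      SimpleGraph.mem_edgeFinset.mpr ((SimpleGraph.mem_edgeSet Γ).mpr hadj)
    have hkey := key p
    have haA : (Finset.univ.filter (fun k => A (Pi.single k 1) = p)).card = 0 := by
      rw [Finset.card_eq_zero, Finset.filter_eq_empty_iff]
      intro k _ h
      rw [hσ0 k] at h
      exact E_ne_V (by simp [Sym2.mk_isDiag_iff, hσne]) (σ0 k) h
    rw [haA, a0_edge _ hpmem, b0_edge _ hpmem] at hkey
    have hbA : 0 < (Γ.edgeFinset.filter
        (fun s => A (fun k => if k ∈ s then (1:ℝ) else 0) = p)).card := by omega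
    obtain ⟨t, ht⟩ := Finset.card_pos.mp hbA
    have htmem := (Finset.mem_filter.mp ht).1
    have hteq := (Finset.mem_filter.mp ht).2
    -- t = s(k, l) with k ≠ l
    induction t using Sym2.ind with
    | _ k l =>
      have hkl : k ≠ l := fun h =>
        hndiag _ htmem (by simp [Sym2.mk_isDiag_iff, h])
      rw [hAedge k l hkl] at hteq
      have : s(σ0 k, σ0 l) = s(σ0 i, σ0 j) := V_inj hteq
      rw [Sym2.eq_iff] at this
      rcases this with ⟨h1, h2⟩ | ⟨h1, h2⟩
      · rw [σ0.injective h1, σ0.injective h2] at htmem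
        exact (SimpleGraph.mem_edgeSet Γ).mp (SimpleGraph.mem_edgeFinset.mp htmem)
      · rw [σ0.injective h1, σ0.injective h2] at htmem
        exact ((SimpleGraph.mem_edgeSet Γ).mp (SimpleGraph.mem_edgeFinset.mp htmem)).symm
  exact ⟨⟨σ0, fun {a b} => ⟨rev a b, fwd a b⟩⟩, hσ0⟩
end

section
/- Let Σ be an n×n real symmetric matrix with pairwise distinct eigenvalues, i.e., Σ = V Λ Vᵀ where V is orthogonal and Λ is diagonal with pairwise distinct diagonal entries. Let A be an n×n real matrix that is normal (A Aᵀ = Aᵀ A), has finite order (A^m = I for some integer m ≥ 1), and satisfies A Σ Aᵀ = Σ. Then A is an involution: A² = I. -/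
open Matrix

lemma conj_diag_pow_eq_one {n m : ℕ} (U : Matrix (Fin n) (Fin n) ℝ) (d : Fin n → ℝ)
    (hUU : star U * U = 1) (hUU' : U * star U = 1)
    (hm : m ≠ 0) (hd : ∀ i, 0 ≤ d i)
    (h : (U * diagonal d * star U) ^ m = 1) : U * diagonal d * star U = 1 := by
  have assoc : ∀ X Y : Matrix (Fin n) (Fin n) ℝ,
      (U * X * star U) * (U * Y * star U) = U * (X * Y) * star U := by
    intro X Y
    calc (U * X * star U) * (U * Y * star U) = U * X * (star U * U) * Y * star U := by
          noncomm_ring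
      _ = U * (X * Y) * star U := by rw [hUU, mul_one, mul_assoc U X Y]
  have key : ∀ k : ℕ, (U * diagonal d * star U) ^ k = U * diagonal (fun i => d i ^ k) * star U := by
    intro k
    induction k with
    | zero =>
      rw [pow_zero, show diagonal (fun i => d i ^ 0) = (1 : Matrix (Fin n) (Fin n) ℝ)
        by simp, mul_one, hUU']
    | succ k ih =>
      rw [pow_succ, ih, assoc, diagonal_mul_diagonal]
      have : (fun i => d i ^ k * d i) = fun i => d i ^ (k + 1) := by
        funext i; rw [pow_succ]
      rw [this]
  have hdiag : diagonal (fun i => d i ^ m) = 1 := by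
    have h1 : U * diagonal (fun i => d i ^ m) * star U = 1 := by rw [← key, h]
    calc diagonal (fun i => d i ^ m)
        = (star U * U) * diagonal (fun i => d i ^ m) * (star U * U) := by
          rw [hUU, one_mul, mul_one]
      _ = star U * (U * diagonal (fun i => d i ^ m) * star U) * U := by noncomm_ring
      _ = 1 := by rw [h1, mul_one, hUU]
  have hev : ∀ i, d i = 1 := by
    intro i
    have h1 : d i ^ m = 1 := by
      have := congrFun (congrFun hdiag i) i
      simpa [diagonal, one_apply] using this
    rcases lt_trichotomy (d i) 1 with hlt | heq | hgt
    · have := pow_lt_one₀ (hd i) hlt hm; linarith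
    · exact heq
    · have := one_lt_pow₀ hgt hm; linarith
  rw [show diagonal d = (1 : Matrix (Fin n) (Fin n) ℝ) by
    rw [show d = fun _ => (1:ℝ) by ext i; exact hev i]; simp, mul_one, hUU']

lemma psd_pow_one {n m : ℕ} {M : Matrix (Fin n) (Fin n) ℝ} (hM : M.PosSemidef)
    (hm : m ≠ 0) (h : M ^ m = 1) : M = 1 := by
  have hH : M.IsHermitian := hM.1
  have hspec : M = (hH.eigenvectorUnitary : Matrix (Fin n) (Fin n) ℝ) * diagonal hH.eigenvalues
      * star (hH.eigenvectorUnitary : Matrix (Fin n) (Fin n) ℝ) := by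
    have := hH.spectral_theorem
    simpa [Function.comp] using this
  rw [hspec]
  exact conj_diag_pow_eq_one _ _ (Unitary.coe_star_mul_self _) (Unitary.coe_mul_star_self _)
    hm hM.eigenvalues_nonneg (by rw [← hspec]; exact h)

/-- If `Σ` is a real symmetric matrix with pairwise distinct eigenvalues and `A` is a
normal matrix of finite order with `A Σ Aᵀ = Σ`, then `A` is an involution. -/
theorem normal_symmetry_of_distinct_eigenvalues_is_involution (n : ℕ)
    (S : Matrix (Fin n) (Fin n) ℝ)
    (V : Matrix (Fin n) (Fin n) ℝ) (hV : Vᵀ * V = 1)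
    (Λ : Fin n → ℝ) (hΛ : Function.Injective Λ)
    (hdecomp : S = V * Matrix.diagonal Λ * Vᵀ)
    (A : Matrix (Fin n) (Fin n) ℝ)
    (hnormal : A * Aᵀ = Aᵀ * A) (m : ℕ) (hm : 1 ≤ m) (hord : A ^ m = 1)
    (hsym : A * S * Aᵀ = S) :
    A * A = 1 := by
  have hVV' : V * Vᵀ = 1 := mul_eq_one_comm.mp hV
  have hm0 : m ≠ 0 := by omega
  -- A is orthogonal
  have hTc : Aᴴ = Aᵀ := by ext i j; simp [conjTranspose_apply]
  have hATm : Aᵀ ^ m = 1 := by rw [← transpose_pow, hord, transpose_one]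
  have hcomm : Commute A Aᵀ := hnormal
  have hMm : (A * Aᵀ) ^ m = 1 := by rw [hcomm.mul_pow, hord, hATm, one_mul]
  have hpsd : (A * Aᵀ).PosSemidef := by
    have := Matrix.posSemidef_self_mul_conjTranspose A
    rwa [hTc] at this
  have hAAt : A * Aᵀ = 1 := psd_pow_one hpsd hm0 hMm
  have hAtA : Aᵀ * A = 1 := by rw [← hnormal, hAAt]
  -- A commutes with S
  have hAS : A * S = S * A := by
    calc A * S = A * S * (Aᵀ * A) := by rw [hAtA, mul_one]
      _ = (A * S * Aᵀ) * A := by noncomm_ring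
      _ = S * A := by rw [hsym]
  -- B commutes with diagonal Λ
  set B : Matrix (Fin n) (Fin n) ℝ := Vᵀ * A * V with hB
  have hBΛ : B * diagonal Λ = diagonal Λ * B := by
    have h1 : A * (V * diagonal Λ * Vᵀ) = (V * diagonal Λ * Vᵀ) * A := by
      rw [← hdecomp]; exact hAS
    calc B * diagonal Λ = Vᵀ * A * V * diagonal Λ * (Vᵀ * V) := by rw [hV, mul_one, hB]
      _ = Vᵀ * (A * (V * diagonal Λ * Vᵀ)) * V := by noncomm_ring
      _ = Vᵀ * (V * diagonal Λ * Vᵀ * A) * V := by rw [h1]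
      _ = (Vᵀ * V) * diagonal Λ * (Vᵀ * A * V) := by noncomm_ring
      _ = diagonal Λ * B := by rw [hV, one_mul, hB]
  -- B is off-diagonal zero
  have hBod : ∀ i j, i ≠ j → B i j = 0 := by
    intro i j hij
    have := congrFun (congrFun hBΛ i) j
    rw [mul_diagonal, diagonal_mul] at this
    have hne : Λ j - Λ i ≠ 0 := sub_ne_zero.mpr fun hc => hij (hΛ hc).symm
    have h2 : B i j * (Λ j - Λ i) = 0 := by linear_combination this
    exact (mul_eq_zero.mp h2).resolve_right hne
  have hBsymm : Bᵀ = B := by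
    ext i j
    rcases eq_or_ne i j with rfl | hij
    · rfl
    · rw [transpose_apply, hBod i j hij, hBod j i (Ne.symm hij)]
  -- B * B = 1
  have hBt : Bᵀ = Vᵀ * Aᵀ * V := by
    rw [hB, transpose_mul, transpose_mul, transpose_transpose]; noncomm_ring
  have hBBt : B * Bᵀ = 1 := by
    calc B * Bᵀ = Vᵀ * A * V * (Vᵀ * Aᵀ * V) := by rw [hB, hBt]
      _ = Vᵀ * (A * (V * Vᵀ) * Aᵀ) * V := by noncomm_ring
      _ = 1 := by rw [hVV', mul_one, hAAt, mul_one, hV]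
  have hBB : B * B = 1 := by nth_rewrite 2 [← hBsymm]; exact hBBt
  -- conclude
  have hA : A = V * B * Vᵀ := by
    rw [hB]
    calc A = (V * Vᵀ) * A * (V * Vᵀ) := by rw [hVV', one_mul, mul_one]
      _ = V * (Vᵀ * A * V) * Vᵀ := by noncomm_ring
  rw [hA]
  calc (V * B * Vᵀ) * (V * B * Vᵀ) = V * (B * (Vᵀ * V) * B) * Vᵀ := by noncomm_ring
    _ = 1 := by rw [hV, mul_one, hBB, mul_one, hVV']
end

section
/- Let Σ be an n×n real symmetric matrix with pairwise distinct eigenvalues, i.e., Σ = V Λ Vᵀ where V is orthogonal and Λ is diagonal with pairwise distinct diagonal entries. Let G be a finite group of n×n real matrices, each of which is normal (A Aᵀ = Aᵀ A), has finite order, and satisfies A Σ Aᵀ = Σ. Then G is isomorphic as a group to (ℤ/2ℤ)^k for some natural number k. -/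
open Matrix

private lemma conj_pow_aux {n : ℕ} (U P : Matrix (Fin n) (Fin n) ℝ)
    (h1 : U * star U = 1) (h2 : star U * U = 1) (m : ℕ) :
    (star U * P * U) ^ m = star U * P ^ m * U := by
  induction m with
  | zero => simpa using h2.symm
  | succ m ih =>
      rw [pow_succ, ih, pow_succ]
      simp only [mul_assoc]
      rw [show U * (star U * (P * U)) = P * U by rw [← mul_assoc, h1, one_mul]]

/-- A positive semidefinite real matrix with `P ^ m = 1`, `m ≥ 1`, equals `1`. -/
private lemma psd_pow_eq_one {n m : ℕ} (P : Matrix (Fin n) (Fin n) ℝ)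
    (hP : P.PosSemidef) (hm : 1 ≤ m) (h : P ^ m = 1) : P = 1 := by
  have hH := hP.isHermitian
  set U : Matrix (Fin n) (Fin n) ℝ := (hH.eigenvectorUnitary : Matrix (Fin n) (Fin n) ℝ) with hU
  have hU1 : U * star U = 1 := (Matrix.mem_unitaryGroup_iff).mp hH.eigenvectorUnitary.2
  have hU2 : star U * U = 1 := (Matrix.mem_unitaryGroup_iff').mp hH.eigenvectorUnitary.2
  have hcompid : (RCLike.ofReal ∘ hH.eigenvalues : Fin n → ℝ) = hH.eigenvalues := by
    rw [RCLike.ofReal_real_eq_id]; rfl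
  have hdiag : star U * P * U = diagonal hH.eigenvalues := by
    have := hH.conjStarAlgAut_star_eigenvectorUnitary
    rw [Unitary.conjStarAlgAut_star_apply] at this
    rwa [hcompid] at this
  have hdm : (diagonal hH.eigenvalues : Matrix (Fin n) (Fin n) ℝ) ^ m = 1 := by
    rw [← hdiag, conj_pow_aux U P hU1 hU2, h, mul_one, hU2]
  rw [Matrix.diagonal_pow] at hdm
  have heig : ∀ i, hH.eigenvalues i = 1 := by
    intro i
    have h1 : (hH.eigenvalues i) ^ m = 1 := by
      have := congrFun (congrFun hdm i) i
      simpa [Matrix.diagonal_apply_eq, Matrix.one_apply_eq] using this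
    have h0 : (0 : ℝ) ≤ hH.eigenvalues i := hP.eigenvalues_nonneg i
    set x : ℝ := hH.eigenvalues i
    rcases lt_trichotomy x 1 with hx | hx | hx
    · exfalso
      have : x ^ m < 1 := pow_lt_one₀ h0 hx (by omega)
      rw [h1] at this; exact lt_irrefl 1 this
    · exact hx
    · exfalso
      have : 1 < x ^ m := one_lt_pow₀ hx (by omega)
      rw [h1] at this; exact lt_irrefl 1 this
  have hdone : (diagonal (RCLike.ofReal ∘ hH.eigenvalues) : Matrix (Fin n) (Fin n) ℝ) = 1 := by
    rw [hcompid, show (hH.eigenvalues : Fin n → ℝ) = fun _ => 1 from funext heig]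
    exact Matrix.diagonal_one
  have hspec := hH.spectral_theorem
  rw [hdone, map_one] at hspec
  exact hspec

/-- A matrix commuting with a diagonal matrix with distinct entries is diagonal. -/
private lemma eq_diagonal_of_commute {n : ℕ} (B : Matrix (Fin n) (Fin n) ℝ)
    (Λ : Fin n → ℝ) (hΛ : Function.Injective Λ)
    (h : B * diagonal Λ = diagonal Λ * B) :
    B = diagonal (fun i => B i i) := by
  ext i j
  by_cases hij : i = j
  · subst hij; simp
  · have h1 := congrFun (congrFun h i) j
    rw [Matrix.mul_diagonal, Matrix.diagonal_mul] at h1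
    have : B i j * (Λ j - Λ i) = 0 := by ring_nf; linarith [h1]
    rcases mul_eq_zero.mp this with h2 | h2
    · simp [Matrix.diagonal_apply_ne _ hij, h2]
    · exact absurd (hΛ (by linarith : Λ j = Λ i)) (Ne.symm hij)

/-- If `Σ` is a real symmetric matrix with pairwise distinct eigenvalues and `G` is a finite
group of `n×n` real matrices, each of which is normal, of finite order, and satisfies
`A Σ Aᵀ = Σ`, then `G ≅ (ℤ/2ℤ)^k` for some `k`. -/
theorem symmetry_group_is_elementary_abelian_two_group (n : ℕ)
    (S : Matrix (Fin n) (Fin n) ℝ)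
    (V : Matrix (Fin n) (Fin n) ℝ) (hV : Vᵀ * V = 1)
    (Λ : Fin n → ℝ) (hΛ : Function.Injective Λ)
    (hdecomp : S = V * Matrix.diagonal Λ * Vᵀ)
    (G : Subgroup (GL (Fin n) ℝ)) [Finite G]
    (hnormal : ∀ A ∈ G, (A : Matrix (Fin n) (Fin n) ℝ) * (A : Matrix (Fin n) (Fin n) ℝ)ᵀ =
      (A : Matrix (Fin n) (Fin n) ℝ)ᵀ * (A : Matrix (Fin n) (Fin n) ℝ))
    (hord : ∀ A ∈ G, ∃ m : ℕ, 1 ≤ m ∧ (A : Matrix (Fin n) (Fin n) ℝ) ^ m = 1)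
    (hsym : ∀ A ∈ G, (A : Matrix (Fin n) (Fin n) ℝ) * S * (A : Matrix (Fin n) (Fin n) ℝ)ᵀ = S) :
    ∃ k : ℕ, Nonempty (G ≃* (Fin k → Multiplicative (ZMod 2))) := by
  have hVV : V * Vᵀ = 1 := mul_eq_one_comm.mp hV
  -- Step 1: every element of G squares to the identity.
  have key : ∀ g : G, g ^ 2 = 1 := by
    intro g
    obtain ⟨m, hm1, hm⟩ := hord g g.2
    set A : Matrix (Fin n) (Fin n) ℝ := ((g : GL (Fin n) ℝ) : Matrix (Fin n) (Fin n) ℝ) with hA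
    set B : Matrix (Fin n) (Fin n) ℝ := Vᵀ * A * V with hB
    have hBt : Bᵀ = Vᵀ * Aᵀ * V := by
      simp [hB, Matrix.transpose_mul, mul_assoc]
    -- B is orthogonal
    have hBpow : B ^ m = 1 := by
      have hstar : star V = Vᵀ := rfl
      have : B ^ m = Vᵀ * A ^ m * V := by
        have := conj_pow_aux V A (by rw [hstar]; exact hVV) (by rw [hstar]; exact hV) m
        rw [hstar] at this
        exact this
      rw [this, hm, mul_one, hV]
    have hBnormal : B * Bᵀ = Bᵀ * B := by
      rw [hB, hBt]
      calc Vᵀ * A * V * (Vᵀ * Aᵀ * V) = Vᵀ * (A * (V * Vᵀ) * Aᵀ) * V := by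
            simp only [mul_assoc]
        _ = Vᵀ * (A * Aᵀ) * V := by rw [hVV]; simp [mul_assoc]
        _ = Vᵀ * (Aᵀ * A) * V := by rw [hnormal g g.2]
        _ = Vᵀ * (Aᵀ * (V * Vᵀ) * A) * V := by rw [hVV]; simp [mul_assoc]
        _ = Vᵀ * Aᵀ * V * (Vᵀ * A * V) := by simp only [mul_assoc]
    -- B * Bᵀ is PSD and (B * Bᵀ)^m = 1
    have hPSD : (B * Bᵀ).PosSemidef := by
      have := Matrix.posSemidef_self_mul_conjTranspose B
      simpa using this
    have hcomm : Commute B Bᵀ := hBnormal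
    have hBBt : (B * Bᵀ) ^ m = 1 := by
      rw [hcomm.mul_pow, hBpow, one_mul]
      have : (Bᵀ) ^ m = (B ^ m)ᵀ := (Matrix.transpose_pow B m).symm
      rw [this, hBpow, Matrix.transpose_one]
    have hOrth : B * Bᵀ = 1 := psd_pow_eq_one _ hPSD hm1 hBBt
    have hOrth' : Bᵀ * B = 1 := mul_eq_one_comm.mp hOrth
    -- B commutes with diagonal Λ
    have hBΛBt : B * diagonal Λ * Bᵀ = diagonal Λ := by
      have h1 := hsym g g.2
      rw [hdecomp] at h1
      have h2 : Vᵀ * (A * (V * Matrix.diagonal Λ * Vᵀ) * Aᵀ) * V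
          = Vᵀ * (V * Matrix.diagonal Λ * Vᵀ) * V := by rw [h1]
      calc B * diagonal Λ * Bᵀ
          = Vᵀ * (A * (V * Matrix.diagonal Λ * Vᵀ) * Aᵀ) * V := by
            rw [hB, hBt]; simp only [mul_assoc]
        _ = Vᵀ * (V * Matrix.diagonal Λ * Vᵀ) * V := h2
        _ = diagonal Λ := by
            calc Vᵀ * (V * Matrix.diagonal Λ * Vᵀ) * V
                = (Vᵀ * V) * Matrix.diagonal Λ * (Vᵀ * V) := by simp only [mul_assoc]
              _ = diagonal Λ := by rw [hV]; simp
    have hBcomm : B * diagonal Λ = diagonal Λ * B := by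
      have : B * diagonal Λ * (Bᵀ * B) = diagonal Λ * B := by
        rw [← mul_assoc, hBΛBt]
      rwa [hOrth', mul_one] at this
    -- B is diagonal with entries of modulus 1, hence B^2 = 1
    have hBdiag : B = diagonal (fun i => B i i) := eq_diagonal_of_commute B Λ hΛ hBcomm
    have hBsq : B * B = 1 := by
      rw [hBdiag, Matrix.diagonal_mul_diagonal]
      have : ∀ i, B i i * B i i = 1 := by
        intro i
        have h1 : (fun i => B i i) i ^ m = 1 := by
          have : diagonal (fun i => B i i) ^ m = 1 := by rw [← hBdiag]; exact hBpow
          rw [Matrix.diagonal_pow] at this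
          have := congrFun (congrFun this i) i
          simpa using this
        have habs : |B i i| = 1 := by
          have : |B i i| ^ m = 1 := by
            rw [← abs_pow]; simp only at h1; rw [h1]; exact abs_one
          rcases lt_trichotomy (|B i i|) 1 with hx | hx | hx
          · exfalso
            have h2 : |B i i| ^ m < 1 := pow_lt_one₀ (abs_nonneg _) hx (by omega)
            rw [this] at h2; exact lt_irrefl 1 h2
          · exact hx
          · exfalso
            have h2 : 1 < |B i i| ^ m := one_lt_pow₀ hx (by omega)
            rw [this] at h2; exact lt_irrefl 1 h2
        have := sq_abs (B i i)
        rw [habs] at this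
        nlinarith [this]
      rw [show (fun i => B i i * B i i) = fun _ => (1:ℝ) from funext this]
      exact Matrix.diagonal_one
    -- transfer back to A
    have hAsq : A * A = 1 := by
      have hAB : A = V * B * Vᵀ := by
        rw [hB]
        calc A = (V * Vᵀ) * A * (V * Vᵀ) := by rw [hVV]; simp
          _ = V * (Vᵀ * A * V) * Vᵀ := by simp only [mul_assoc]
      rw [hAB]
      calc V * B * Vᵀ * (V * B * Vᵀ) = V * (B * (Vᵀ * V) * B) * Vᵀ := by
            simp only [mul_assoc]
        _ = V * (B * B) * Vᵀ := by rw [hV]; simp [mul_assoc]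
        _ = 1 := by rw [hBsq, mul_one, hVV]
    -- conclude g^2 = 1 in G
    have : ((g : GL (Fin n) ℝ) : Matrix (Fin n) (Fin n) ℝ) ^ 2 = 1 := by
      rw [pow_two]; exact hAsq
    have hGL : (g : GL (Fin n) ℝ) ^ 2 = 1 := by
      apply Units.ext
      rw [Units.val_pow_eq_pow_val, this]
      rfl
    refine Subtype.ext ?_
    rw [SubmonoidClass.coe_pow, hGL]
    rfl
  -- Step 2: G is an elementary abelian 2-group, hence ≅ (ZMod 2)^k.
  letI : CommGroup G :=
    { (inferInstance : Group G) with
      mul_comm := by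
        intro a b
        have hinv : ∀ x : G, x⁻¹ = x := by
          intro x
          have hx := key x
          rw [pow_two] at hx
          exact inv_eq_of_mul_eq_one_right hx
        calc a * b = ((a * b)⁻¹)⁻¹ := (inv_inv _).symm
          _ = (b⁻¹ * a⁻¹)⁻¹ := by rw [_root_.mul_inv_rev]
          _ = (b * a)⁻¹⁻¹ := by rw [hinv a, hinv b]; exact (hinv _).symm
          _ = b * a := inv_inv _ }
  letI : Module (ZMod 2) (Additive G) :=
    AddCommGroup.zmodModule (by
      intro x
      have hx := key (Additive.toMul x)
      rw [pow_two] at hx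
      show (2 : ℕ) • x = 0
      rw [two_nsmul]
      exact hx)
  haveI : Module.Finite (ZMod 2) (Additive G) := Module.Finite.of_finite
  let b := Module.finBasis (ZMod 2) (Additive G)
  let e1 : Additive G ≃+ (Fin (Module.finrank (ZMod 2) (Additive G)) → ZMod 2) :=
    b.equivFun.toAddEquiv
  refine ⟨Module.finrank (ZMod 2) (Additive G), ⟨?_⟩⟩
  exact (MulEquiv.multiplicativeAdditive G).symm.trans
    ((AddEquiv.toMultiplicative e1).trans (MulEquiv.piMultiplicative _))
end

section
/- Let Σ be an n×n real symmetric matrix with orthogonal eigenvalue decomposition Σ = V Λ Vᵀ, where V is orthogonal and Λ is diagonal with pairwise distinct diagonal entries. Let A be an n×n real orthogonal matrix with A² = I and A Σ Aᵀ = Σ. Then A = V D Vᵀ, where D is a diagonal matrix each of whose diagonal entries is 1 or −1. -/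
open Matrix

/-- If `Σ = V Λ Vᵀ` is an orthogonal eigenvalue decomposition with pairwise distinct
eigenvalues, and `A` is an orthogonal involution with `A Σ Aᵀ = Σ`, then `A = V D Vᵀ`
for a diagonal matrix `D` with diagonal entries `±1`. -/
theorem orthogonal_involution_symmetry_decomposition (n : ℕ)
    (S : Matrix (Fin n) (Fin n) ℝ)
    (V : Matrix (Fin n) (Fin n) ℝ) (hV : Vᵀ * V = 1)
    (Λ : Fin n → ℝ) (hΛ : Function.Injective Λ)
    (hdecomp : S = V * Matrix.diagonal Λ * Vᵀ)
    (A : Matrix (Fin n) (Fin n) ℝ)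
    (horth : Aᵀ * A = 1) (hinv : A * A = 1)
    (hsym : A * S * Aᵀ = S) :
    ∃ D : Fin n → ℝ, (∀ i, D i = 1 ∨ D i = -1) ∧ A = V * Matrix.diagonal D * Vᵀ := by
  have hVV : V * Vᵀ = 1 := mul_eq_one_comm.mp hV
  have hAT : Aᵀ = A := by
    calc Aᵀ = Aᵀ * (A * A) := by rw [hinv, mul_one]
    _ = (Aᵀ * A) * A := by rw [mul_assoc]
    _ = A := by rw [horth, one_mul]
  set B : Matrix (Fin n) (Fin n) ℝ := Vᵀ * A * V with hB
  have hcomm : B * Matrix.diagonal Λ = Matrix.diagonal Λ * B := by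
    have h1 : A * (V * Matrix.diagonal Λ * Vᵀ) = (V * Matrix.diagonal Λ * Vᵀ) * A := by
      have := hsym
      rw [hAT, hdecomp] at this
      calc A * (V * Matrix.diagonal Λ * Vᵀ)
          = A * (V * Matrix.diagonal Λ * Vᵀ) * (A * A) := by rw [hinv, mul_one]
        _ = (A * (V * Matrix.diagonal Λ * Vᵀ) * A) * A := by noncomm_ring
        _ = (V * Matrix.diagonal Λ * Vᵀ) * A := by rw [this]
    calc B * Matrix.diagonal Λ
        = Vᵀ * (A * (V * Matrix.diagonal Λ * Vᵀ)) * V := by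
          simp only [hB, mul_assoc, hV, mul_one]
      _ = Vᵀ * ((V * Matrix.diagonal Λ * Vᵀ) * A) * V := by rw [h1]
      _ = Matrix.diagonal Λ * B := by
          simp only [hB, ← mul_assoc, hV, one_mul]
  have hoff : ∀ i j, i ≠ j → B i j = 0 := by
    intro i j hij
    have := congrFun (congrFun hcomm i) j
    rw [Matrix.mul_diagonal, Matrix.diagonal_mul] at this
    have hΛij : Λ i ≠ Λ j := fun h => hij (hΛ h)
    have : B i j * (Λ j - Λ i) = 0 := by linarith [this]
    rcases mul_eq_zero.mp this with h | h
    · exact h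
    · exact absurd (by linarith : Λ i = Λ j) hΛij
  have hBdiag : B = Matrix.diagonal (fun i => B i i) := by
    ext i j
    by_cases h : i = j
    · subst h; simp
    · rw [Matrix.diagonal_apply_ne _ h]; exact hoff i j h
  have hBB : B * B = 1 := by
    calc B * B = Vᵀ * A * (V * Vᵀ) * A * V := by simp only [hB, mul_assoc]
      _ = Vᵀ * (A * A) * V := by rw [hVV]; simp [mul_assoc]
      _ = 1 := by rw [hinv, mul_one, hV]
  refine ⟨fun i => B i i, ?_, ?_⟩
  · intro i
    have := congrFun (congrFun hBB i) i
    rw [hBdiag] at this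
    rw [Matrix.diagonal_mul_diagonal] at this
    simp only [Matrix.diagonal_apply_eq, Matrix.one_apply_eq] at this
    exact mul_self_eq_one_iff.mp this
  · rw [← hBdiag, hB]
    calc A = (V * Vᵀ) * A * (V * Vᵀ) := by rw [hVV]; simp
      _ = V * (Vᵀ * A * V) * Vᵀ := by noncomm_ring
end

section
/- Let Σ and Σ̂ be d×d real symmetric matrices, let v_1,...,v_d be an orthonormal eigenbasis of Σ with Σ v_i = λ_i v_i, and suppose ‖Σ̂ − Σ‖_op < ε₂. Let v̂ be a unit vector with Σ̂ v̂ = λ̂ v̂, write a_i = ⟨v̂, v_i⟩, and suppose there is an index k such that |λ̂ − λ_i| ≥ δ for all i ≠ k, where δ > 0. Then Σ_{i ≠ k} a_i² < ε₂²/δ², and consequently a_k² > 1 − ε₂²/δ². -/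
open Matrix
open scoped RealInnerProductSpace

/-- If `‖Σ̂ − Σ‖_op < ε₂`, `v̂` is a unit eigenvector of `Σ̂` with eigenvalue `λ̂`, and
`|λ̂ − λ_i| ≥ δ` for all `i ≠ k`, then the coefficients `a_i = ⟨v̂, v_i⟩` of `v̂` in the
orthonormal eigenbasis of `Σ` satisfy `Σ_{i ≠ k} a_i² < ε₂²/δ²`, and hence
`a_k² > 1 − ε₂²/δ²`. -/
theorem perturbed_eigenvector_coefficient_bounds (d : ℕ)
    (S Shat : Matrix (Fin d) (Fin d) ℝ) (hS : S.IsSymm) (hShat : Shat.IsSymm)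
    (b : OrthonormalBasis (Fin d) ℝ (EuclideanSpace ℝ (Fin d))) (lam : Fin d → ℝ)
    (hb : ∀ i, Matrix.toEuclideanCLM (𝕜 := ℝ) S (b i) = lam i • b i)
    (δ ε₂ : ℝ) (hδ : 0 < δ)
    (hop : ‖Matrix.toEuclideanCLM (𝕜 := ℝ) (Shat - S)‖ < ε₂)
    (vhat : EuclideanSpace ℝ (Fin d)) (hvhat : ‖vhat‖ = 1) (lamhat : ℝ)
    (heig : Matrix.toEuclideanCLM (𝕜 := ℝ) Shat vhat = lamhat • vhat)
    (k : Fin d) (hk : ∀ i, i ≠ k → δ ≤ |lamhat - lam i|) :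
    (∑ i ∈ Finset.univ.erase k, ⟪vhat, b i⟫ ^ 2) < ε₂ ^ 2 / δ ^ 2 ∧
      1 - ε₂ ^ 2 / δ ^ 2 < ⟪vhat, b k⟫ ^ 2 := by
  set T := Matrix.toEuclideanCLM (𝕜 := ℝ) (Shat - S) with hT
  set w : EuclideanSpace ℝ (Fin d) := T vhat with hw
  -- S is self-adjoint as an operator
  have hSsym : (Matrix.toEuclideanLin S).IsSymmetric :=
    (Matrix.isHermitian_iff_isSymmetric).mp (by
      rw [Matrix.IsHermitian, Matrix.conjTranspose]
      ext i j
      simpa using (congrFun (congrFun hS j) i).symm)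
  -- key: ⟪w, b i⟫ = (lamhat - lam i) * ⟪vhat, b i⟫
  have key : ∀ i, ⟪w, b i⟫ = (lamhat - lam i) * ⟪vhat, b i⟫ := by
    intro i
    have h1 : w = lamhat • vhat - Matrix.toEuclideanCLM (𝕜 := ℝ) S vhat := by
      rw [hw, hT, map_sub, ContinuousLinearMap.sub_apply, heig]
    have h2 : ⟪Matrix.toEuclideanCLM (𝕜 := ℝ) S vhat, b i⟫ = lam i * ⟪vhat, b i⟫ := by
      have := hSsym vhat (b i)
      rw [← Matrix.coe_toEuclideanCLM_eq_toEuclideanLin] at this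
      simp only [ContinuousLinearMap.coe_coe] at this
      rw [this, hb i, inner_smul_right]
    rw [h1, inner_sub_left, inner_smul_left, h2]
    ring_nf
    simp [mul_comm]
    ring
  -- Parseval for w and vhat
  have parw : ∑ i, ⟪w, b i⟫ ^ 2 = ‖w‖ ^ 2 := by
    have := b.sum_inner_mul_inner w w
    rw [real_inner_self_eq_norm_sq] at this
    rw [← this]
    refine Finset.sum_congr rfl fun i _ => ?_
    rw [real_inner_comm (b i) w]; ring
  have parv : ∑ i, ⟪vhat, b i⟫ ^ 2 = 1 := by
    have := b.sum_inner_mul_inner vhat vhat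
    rw [real_inner_self_eq_norm_sq, hvhat, one_pow] at this
    rw [← this]
    refine Finset.sum_congr rfl fun i _ => ?_
    rw [real_inner_comm (b i) vhat]; ring
  have hε₂ : 0 < ε₂ := lt_of_le_of_lt (norm_nonneg _) hop
  have hwle : ‖w‖ < ε₂ := by
    calc ‖w‖ ≤ ‖T‖ * ‖vhat‖ := T.le_opNorm vhat
    _ = ‖T‖ := by rw [hvhat, mul_one]
    _ < ε₂ := hop
  have hwsq : ‖w‖ ^ 2 < ε₂ ^ 2 := by
    apply sq_lt_sq' _ hwle
    linarith [norm_nonneg w]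
  -- main bound
  have hbound : δ ^ 2 * ∑ i ∈ Finset.univ.erase k, ⟪vhat, b i⟫ ^ 2 < ε₂ ^ 2 := by
    calc δ ^ 2 * ∑ i ∈ Finset.univ.erase k, ⟪vhat, b i⟫ ^ 2
        = ∑ i ∈ Finset.univ.erase k, δ ^ 2 * ⟪vhat, b i⟫ ^ 2 := Finset.mul_sum _ _ _
      _ ≤ ∑ i ∈ Finset.univ.erase k, ⟪w, b i⟫ ^ 2 := by
          refine Finset.sum_le_sum fun i hi => ?_
          rw [key i, mul_pow]
          have h := hk i (Finset.ne_of_mem_erase hi)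
          have : δ ^ 2 ≤ (lamhat - lam i) ^ 2 := by
            rw [← sq_abs (lamhat - lam i)]
            exact pow_le_pow_left₀ hδ.le h 2
          exact mul_le_mul_of_nonneg_right this (sq_nonneg _)
      _ ≤ ∑ i, ⟪w, b i⟫ ^ 2 :=
          Finset.sum_le_sum_of_subset_of_nonneg (Finset.erase_subset _ _)
            (fun i _ _ => sq_nonneg _)
      _ = ‖w‖ ^ 2 := parw
      _ < ε₂ ^ 2 := hwsq
  have h1 : (∑ i ∈ Finset.univ.erase k, ⟪vhat, b i⟫ ^ 2) < ε₂ ^ 2 / δ ^ 2 := by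
    rw [lt_div_iff₀ (by positivity)]
    linarith
  refine ⟨h1, ?_⟩
  have hsplit := Finset.add_sum_erase Finset.univ (fun i => ⟪vhat, b i⟫ ^ 2) (Finset.mem_univ k)
  rw [parv] at hsplit
  linarith
end

section
/- Let Σ and Σ̂ be d×d real symmetric matrices, let v_1,...,v_d be an orthonormal eigenbasis of Σ with Σ v_i = λ_i v_i, and suppose ‖Σ̂ − Σ‖_op < ε₂ with 0 < ε₂ < δ. Let v̂ be a unit vector with Σ̂ v̂ = λ̂ v̂ such that |λ̂ − λ_i| ≥ δ for all i ≠ k, and suppose the sign is aligned so that ⟨v̂, v_k⟩ ≥ 0. Then ‖v̂ − v_k‖² < 2·(1 − √(1 − ε₂²/δ²)). -/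
open Matrix
open scoped RealInnerProductSpace

/-- Under the eigenvalue-separation and operator-norm perturbation hypotheses, if the sign
of the unit eigenvector `v̂` of `Σ̂` is aligned with the corresponding eigenvector `v_k` of
`Σ` (i.e. `⟨v̂, v_k⟩ ≥ 0`), then `‖v̂ − v_k‖² < 2(1 − √(1 − ε₂²/δ²))`. -/
theorem perturbed_eigenvector_distance_bound (d : ℕ)
    (S Shat : Matrix (Fin d) (Fin d) ℝ) (hS : S.IsSymm) (hShat : Shat.IsSymm)
    (b : OrthonormalBasis (Fin d) ℝ (EuclideanSpace ℝ (Fin d))) (lam : Fin d → ℝ)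
    (hb : ∀ i, Matrix.toEuclideanCLM (𝕜 := ℝ) S (b i) = lam i • b i)
    (δ ε₂ : ℝ) (hε₂pos : 0 < ε₂) (hε₂ : ε₂ < δ)
    (hop : ‖Matrix.toEuclideanCLM (𝕜 := ℝ) (Shat - S)‖ < ε₂)
    (vhat : EuclideanSpace ℝ (Fin d)) (hvhat : ‖vhat‖ = 1) (lamhat : ℝ)
    (heig : Matrix.toEuclideanCLM (𝕜 := ℝ) Shat vhat = lamhat • vhat)
    (k : Fin d) (hk : ∀ i, i ≠ k → δ ≤ |lamhat - lam i|)
    (hsign : 0 ≤ ⟪vhat, b k⟫) :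
    ‖vhat - b k‖ ^ 2 < 2 * (1 - Real.sqrt (1 - ε₂ ^ 2 / δ ^ 2)) := by
  have hδpos : (0:ℝ) < δ := hε₂pos.trans hε₂
  set T := Matrix.toEuclideanCLM (𝕜 := ℝ) (Shat - S) with hT
  set c : Fin d → ℝ := fun i => ⟪b i, vhat⟫ with hc
  -- S is symmetric as an operator
  have hSsym : (Matrix.toEuclideanLin S).IsSymmetric := by
    rw [← Matrix.isHermitian_iff_isSymmetric]
    rwa [Matrix.IsHermitian, conjTranspose_eq_transpose_of_trivial]
  -- coefficients of T vhat in basis b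
  have hcoef : ∀ i, ⟪b i, T vhat⟫ = (lamhat - lam i) * c i := by
    intro i
    have h1 : T vhat = lamhat • vhat - Matrix.toEuclideanCLM (𝕜 := ℝ) S vhat := by
      rw [hT, map_sub, ContinuousLinearMap.sub_apply, heig]
    rw [h1, inner_sub_right, real_inner_smul_right]
    have h2 : ⟪b i, Matrix.toEuclideanCLM (𝕜 := ℝ) S vhat⟫
        = lam i * c i := by
      have h := hSsym vhat (b i)
      rw [← Matrix.coe_toEuclideanCLM_eq_toEuclideanLin] at h
      simp only [ContinuousLinearMap.coe_coe] at h
      rw [real_inner_comm, h, hb i, real_inner_smul_right, real_inner_comm (b i) vhat]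
    rw [h2]; ring
  -- Parseval for vhat
  have hpar : ∀ x : EuclideanSpace ℝ (Fin d), ∑ i, ⟪b i, x⟫ ^ 2 = ‖x‖ ^ 2 := by
    intro x
    have := b.sum_inner_mul_inner x x
    rw [real_inner_self_eq_norm_sq] at this
    rw [← this]
    apply Finset.sum_congr rfl
    intro i _
    rw [real_inner_comm x (b i)]; ring
  have hsum : ∑ i, c i ^ 2 = 1 := by
    have := hpar vhat; rwa [hvhat, one_pow] at this
  -- ‖T vhat‖² = ∑ (lamhat - lam i)² c i²
  have hTnorm : ‖T vhat‖ ^ 2 = ∑ i, ((lamhat - lam i) * c i) ^ 2 := by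
    rw [← hpar (T vhat)]
    exact Finset.sum_congr rfl fun i _ => by rw [hcoef i]
  -- strict bound on ‖T vhat‖
  have hTlt : ‖T vhat‖ < ε₂ := by
    calc ‖T vhat‖ ≤ ‖T‖ * ‖vhat‖ := T.le_opNorm vhat
    _ = ‖T‖ := by rw [hvhat, mul_one]
    _ < ε₂ := hop
  have hTsq : ‖T vhat‖ ^ 2 < ε₂ ^ 2 := by
    have := sq_lt_sq' (by linarith [norm_nonneg (T vhat)]) hTlt
    simpa using this
  -- δ² (1 - c k ^ 2) ≤ ‖T vhat‖²
  have hlow : δ ^ 2 * (1 - c k ^ 2) ≤ ‖T vhat‖ ^ 2 := by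
    rw [hTnorm]
    have h1 : ∑ i ∈ Finset.univ.erase k, δ ^ 2 * c i ^ 2
        ≤ ∑ i ∈ Finset.univ.erase k, ((lamhat - lam i) * c i) ^ 2 := by
      apply Finset.sum_le_sum
      intro i hi
      have hik := Finset.ne_of_mem_erase hi
      have := hk i hik
      have h2 : δ ^ 2 ≤ (lamhat - lam i) ^ 2 := by
        rw [← sq_abs (lamhat - lam i)]
        exact pow_le_pow_left₀ hδpos.le this 2
      have := mul_le_mul_of_nonneg_right h2 (sq_nonneg (c i))
      calc δ ^ 2 * c i ^ 2 ≤ (lamhat - lam i) ^ 2 * c i ^ 2 := this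
        _ = ((lamhat - lam i) * c i) ^ 2 := by ring
    have h3 : ∑ i ∈ Finset.univ.erase k, c i ^ 2 = 1 - c k ^ 2 := by
      have h := Finset.sum_erase_add Finset.univ (fun i => c i ^ 2) (Finset.mem_univ k)
      linarith [hsum]
    calc δ ^ 2 * (1 - c k ^ 2) = ∑ i ∈ Finset.univ.erase k, δ ^ 2 * c i ^ 2 := by
          rw [← Finset.mul_sum, h3]
      _ ≤ ∑ i ∈ Finset.univ.erase k, ((lamhat - lam i) * c i) ^ 2 := h1
      _ ≤ ∑ i, ((lamhat - lam i) * c i) ^ 2 := by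
          apply Finset.sum_le_sum_of_subset_of_nonneg (Finset.erase_subset _ _)
          intro i _ _; positivity
  -- conclude c k ^ 2 > 1 - ε₂²/δ²
  have hck2 : 1 - ε₂ ^ 2 / δ ^ 2 < c k ^ 2 := by
    have h4 : δ ^ 2 * (1 - c k ^ 2) < ε₂ ^ 2 := lt_of_le_of_lt hlow hTsq
    have hδ2 : (0:ℝ) < δ ^ 2 := by positivity
    have h5 : (1 - c k ^ 2) < ε₂ ^ 2 / δ ^ 2 := by
      rw [lt_div_iff₀ hδ2]; nlinarith
    linarith
  have hratio : ε₂ ^ 2 / δ ^ 2 < 1 := by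
    rw [div_lt_one (by positivity)]
    exact pow_lt_pow_left₀ hε₂ hε₂pos.le (by norm_num)
  have hckpos : 0 ≤ c k := by
    have : c k = ⟪vhat, b k⟫ := real_inner_comm _ _
    rw [this]; exact hsign
  have hsqrt : Real.sqrt (1 - ε₂ ^ 2 / δ ^ 2) < c k := by
    have := Real.sqrt_lt_sqrt (by linarith) hck2
    rwa [Real.sqrt_sq hckpos] at this
  -- final computation
  have hfin : ‖vhat - b k‖ ^ 2 = 2 - 2 * c k := by
    have hck : c k = ⟪vhat, b k⟫ := real_inner_comm _ _
    rw [norm_sub_sq_real, hvhat, b.orthonormal.1 k, ← hck]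
    ring
  rw [hfin]; linarith
end

section
/- Let Σ and Σ̂ be d×d real symmetric matrices, let v_1,...,v_d be an orthonormal eigenbasis of Σ with Σ v_i = λ_i v_i, and suppose ‖Σ̂ − Σ‖_op < ε₂ with 0 < ε₂ < δ. Let v̂ be a unit vector with Σ̂ v̂ = λ̂ v̂ such that |λ̂ − λ_i| ≥ δ for all i ≠ k. Then (λ̂ − λ_k)² < ε₂² / (1 − ε₂²/δ²). -/
open Matrix
open scoped RealInnerProductSpace

set_option maxHeartbeats 1000000 in
/-- Under the eigenvalue-separation and operator-norm perturbation hypotheses, the eigenvalue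
`λ̂` of `Σ̂` corresponding to the eigenvalue `λ_k` of `Σ` satisfies
`(λ̂ − λ_k)² < ε₂²/(1 − ε₂²/δ²)`. -/
theorem perturbed_eigenvalue_distance_bound (d : ℕ)
    (S Shat : Matrix (Fin d) (Fin d) ℝ) (hS : S.IsSymm) (hShat : Shat.IsSymm)
    (b : OrthonormalBasis (Fin d) ℝ (EuclideanSpace ℝ (Fin d))) (lam : Fin d → ℝ)
    (hb : ∀ i, Matrix.toEuclideanCLM (𝕜 := ℝ) S (b i) = lam i • b i)
    (δ ε₂ : ℝ) (hε₂pos : 0 < ε₂) (hε₂ : ε₂ < δ)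
    (hop : ‖Matrix.toEuclideanCLM (𝕜 := ℝ) (Shat - S)‖ < ε₂)
    (vhat : EuclideanSpace ℝ (Fin d)) (hvhat : ‖vhat‖ = 1) (lamhat : ℝ)
    (heig : Matrix.toEuclideanCLM (𝕜 := ℝ) Shat vhat = lamhat • vhat)
    (k : Fin d) (hk : ∀ i, i ≠ k → δ ≤ |lamhat - lam i|) :
    (lamhat - lam k) ^ 2 < ε₂ ^ 2 / (1 - ε₂ ^ 2 / δ ^ 2) := by
  have hδpos : 0 < δ := hε₂pos.trans hε₂
  set T := Matrix.toEuclideanCLM (𝕜 := ℝ) S with hT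
  -- symmetry of T
  have hsymm : (Matrix.toEuclideanLin S).IsSymmetric := by
    rw [← Matrix.isHermitian_iff_isSymmetric]
    simpa [Matrix.IsHermitian] using hS.eq
  have hsym : ∀ x y : EuclideanSpace ℝ (Fin d), ⟪T x, y⟫ = ⟪x, T y⟫ := by
    intro x y
    have h := hsymm x y
    rw [← Matrix.coe_toEuclideanCLM_eq_toEuclideanLin] at h
    simpa using h
  set r := lamhat • vhat - T vhat with hr
  have hrlt : ‖r‖ < ε₂ := by
    have hre : r = Matrix.toEuclideanCLM (𝕜 := ℝ) (Shat - S) vhat := by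
      rw [map_sub]
      simp [hr, heig, hT]
    calc ‖r‖ ≤ ‖Matrix.toEuclideanCLM (𝕜 := ℝ) (Shat - S)‖ * ‖vhat‖ := by
          rw [hre]; exact ContinuousLinearMap.le_opNorm _ _
      _ = ‖Matrix.toEuclideanCLM (𝕜 := ℝ) (Shat - S)‖ := by rw [hvhat, mul_one]
      _ < ε₂ := hop
  set c : Fin d → ℝ := fun i => ⟪b i, vhat⟫ with hc
  have hci : ∀ i, ⟪b i, r⟫ = (lamhat - lam i) * c i := by
    intro i
    have h1 : ⟪b i, T vhat⟫ = lam i * c i := by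
      rw [← hsym, hb i, real_inner_smul_left]
    rw [hr, inner_sub_right, real_inner_smul_right, h1]
    ring
  have hnorm : ∀ x : EuclideanSpace ℝ (Fin d), ‖x‖ ^ 2 = ∑ i, ⟪b i, x⟫ ^ 2 := by
    intro x
    have h1 : ‖x‖ = ‖b.repr x‖ := (b.repr.norm_map x).symm
    rw [h1, EuclideanSpace.norm_eq, Real.sq_sqrt (by positivity)]
    simp [sq_abs, b.repr_apply_apply]
  have hsum_r : ∑ i, ((lamhat - lam i) * c i) ^ 2 < ε₂ ^ 2 := by
    have h1 : ∑ i, ((lamhat - lam i) * c i) ^ 2 = ‖r‖ ^ 2 := by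
      rw [hnorm r]
      exact Finset.sum_congr rfl fun i _ => by rw [hci i]
    rw [h1]
    exact pow_lt_pow_left₀ hrlt (norm_nonneg r) two_ne_zero
  have hsum_c : ∑ i, (c i) ^ 2 = 1 := by
    have := (hnorm vhat).symm
    rw [hvhat] at this
    simpa using this
  set A := ∑ i ∈ Finset.univ.erase k, (c i) ^ 2 with hA
  have hA0 : 0 ≤ A := Finset.sum_nonneg fun i _ => sq_nonneg _
  have h1 : (c k) ^ 2 + A = 1 := by
    rw [← hsum_c, hA]
    exact Finset.add_sum_erase Finset.univ (fun i => (c i) ^ 2) (Finset.mem_univ k)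
  have h2 : δ ^ 2 * A ≤ ∑ i ∈ Finset.univ.erase k, ((lamhat - lam i) * c i) ^ 2 := by
    rw [hA, Finset.mul_sum]
    apply Finset.sum_le_sum
    intro i hi
    have habs := hk i (Finset.ne_of_mem_erase hi)
    have hsq : δ ^ 2 ≤ (lamhat - lam i) ^ 2 := by
      nlinarith [sq_abs (lamhat - lam i), abs_nonneg (lamhat - lam i)]
    nlinarith [sq_nonneg (c i)]
  have h3 : ((lamhat - lam k) * c k) ^ 2 +
      ∑ i ∈ Finset.univ.erase k, ((lamhat - lam i) * c i) ^ 2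
      = ∑ i, ((lamhat - lam i) * c i) ^ 2 :=
    Finset.add_sum_erase Finset.univ (fun i => ((lamhat - lam i) * c i) ^ 2) (Finset.mem_univ k)
  set X := (lamhat - lam k) ^ 2 with hX
  have hX0 : 0 ≤ X := sq_nonneg _
  have hE1 : X * (c k) ^ 2 + δ ^ 2 * A < ε₂ ^ 2 := by
    have := h2
    nlinarith [hsum_r, h3, mul_pow (lamhat - lam k) (c k) 2]
  have hA_le : A ≤ ε₂ ^ 2 / δ ^ 2 := by
    rw [le_div_iff₀ (pow_pos hδpos 2)]
    nlinarith [mul_nonneg hX0 (sq_nonneg (c k))]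
  have hpos : 0 < 1 - ε₂ ^ 2 / δ ^ 2 := by
    rw [sub_pos, div_lt_one (pow_pos hδpos 2)]
    nlinarith
  rw [lt_div_iff₀ hpos]
  have hck : 1 - ε₂ ^ 2 / δ ^ 2 ≤ (c k) ^ 2 := by linarith
  calc X * (1 - ε₂ ^ 2 / δ ^ 2) ≤ X * (c k) ^ 2 :=
        mul_le_mul_of_nonneg_left hck hX0
    _ < ε₂ ^ 2 := by nlinarith [mul_nonneg (sq_nonneg δ) hA0]
end

section
/- Let Σ and Σ̂ be d×d real symmetric matrices with ‖Σ̂ − Σ‖_op < ε₂, let v_1,...,v_d be an orthonormal eigenbasis of Σ with eigenvalues λ_1,...,λ_d satisfying |λ_i − λ_j| ≥ 2δ for i ≠ j, and suppose 0 < ε₂ < δ. Let v̂_1,...,v̂_d be an orthonormal eigenbasis of Σ̂ with eigenvalues λ̂_1,...,λ̂_d, indexed so that |λ̂_i − λ_i| < δ and ⟨v̂_i, v_i⟩ ≥ 0 for each i. Let μ, μ̂ ∈ ℝ^d satisfy |⟨μ̂, v_i⟩ − ⟨μ, v_i⟩| < ε_{1i} for each i. Then for each k, |⟨μ̂, v̂_k⟩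 − ⟨μ, v_k⟩| < ε_{1k} + √2·(d+1)·‖μ̂‖·√(1 − √(1 − ε₂²/δ²)). -/
open Matrix
open scoped RealInnerProductSpace

/-- Error bound for the estimated mean coefficients in the estimated eigenbasis: if
`‖Σ̂ − Σ‖_op < ε₂ < δ`, the eigenvalues of `Σ` are `2δ`-separated, the eigenbases are matched
up (`|λ̂_i − λ_i| < δ` and `⟨v̂_i, v_i⟩ ≥ 0`), and `|⟨μ̂, v_i⟩ − ⟨μ, v_i⟩| < ε₁ᵢ`, then
`|⟨μ̂, v̂_k⟩ − ⟨μ, v_k⟩| < ε₁ₖ + √2·(d+1)·‖μ̂‖·√(1 − √(1 − ε₂²/δ²))` for every `k`. -/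
theorem mean_coefficient_error_bound (d : ℕ)
    (S Shat : Matrix (Fin d) (Fin d) ℝ) (hS : S.IsSymm) (hShat : Shat.IsSymm)
    (b : OrthonormalBasis (Fin d) ℝ (EuclideanSpace ℝ (Fin d))) (lam : Fin d → ℝ)
    (hb : ∀ i, Matrix.toEuclideanCLM (𝕜 := ℝ) S (b i) = lam i • b i)
    (δ ε₂ : ℝ) (hε₂pos : 0 < ε₂) (hε₂ : ε₂ < δ)
    (hgap : ∀ i j, i ≠ j → 2 * δ ≤ |lam i - lam j|)
    (hop : ‖Matrix.toEuclideanCLM (𝕜 := ℝ) (Shat - S)‖ < ε₂)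
    (bhat : OrthonormalBasis (Fin d) ℝ (EuclideanSpace ℝ (Fin d))) (lamhat : Fin d → ℝ)
    (hbhat : ∀ i, Matrix.toEuclideanCLM (𝕜 := ℝ) Shat (bhat i) = lamhat i • bhat i)
    (hmatch : ∀ i, |lamhat i - lam i| < δ)
    (hsign : ∀ i, 0 ≤ ⟪bhat i, b i⟫)
    (μ μhat : EuclideanSpace ℝ (Fin d)) (ε₁ : Fin d → ℝ)
    (hμ : ∀ i, |⟪μhat, b i⟫ - ⟪μ, b i⟫| < ε₁ i) (k : Fin d) :
    |⟪μhat, bhat k⟫ - ⟪μ, b k⟫| <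
      ε₁ k + Real.sqrt 2 * (d + 1) * ‖μhat‖ *
        Real.sqrt (1 - Real.sqrt (1 - ε₂ ^ 2 / δ ^ 2)) := by
  have hδ : 0 < δ := hε₂pos.trans hε₂
  set T := Matrix.toEuclideanCLM (𝕜 := ℝ) (Shat - S) with hT
  set c : Fin d → ℝ := fun i => ⟪b i, bhat k⟫ with hc
  -- expansion of bhat k in basis b
  have hexp : ∑ i, c i • b i = bhat k := b.sum_repr' (bhat k)
  -- T (bhat k) expanded
  have hTexp : T (bhat k) = ∑ i, ((lamhat k - lam i) * c i) • b i := by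
    have h1 : T (bhat k) = lamhat k • bhat k
        - Matrix.toEuclideanCLM (𝕜 := ℝ) S (bhat k) := by
      rw [hT, map_sub, ContinuousLinearMap.sub_apply, hbhat k]
    have h2 : Matrix.toEuclideanCLM (𝕜 := ℝ) S (bhat k)
        = ∑ i, (lam i * c i) • b i := by
      conv_lhs => rw [← hexp]
      rw [map_sum]
      refine Finset.sum_congr rfl fun i _ => ?_
      rw [_root_.map_smul, hb i, smul_smul, mul_comm (c i) (lam i)]
    have h3 : lamhat k • bhat k = ∑ i, (lamhat k * c i) • b i := by
      conv_lhs => rw [← hexp]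
      rw [Finset.smul_sum]
      exact Finset.sum_congr rfl fun i _ => by rw [smul_smul]
    rw [h1, h2, h3, ← Finset.sum_sub_distrib]
    refine Finset.sum_congr rfl fun i _ => ?_
    rw [← sub_smul]; ring_nf
  -- norms squared via orthonormality
  have hnormT : ‖T (bhat k)‖ ^ 2 = ∑ i, ((lamhat k - lam i) * c i) ^ 2 := by
    rw [← real_inner_self_eq_norm_sq, hTexp, b.orthonormal.inner_sum]
    exact Finset.sum_congr rfl fun i _ => by simp [sq]
  have hparse : ∑ i, c i ^ 2 = 1 := by
    have : ⟪bhat k, bhat k⟫ = ∑ i, c i * c i := by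
      conv_lhs => rw [← hexp]
      exact b.orthonormal.inner_sum c c Finset.univ
    have h1 : ⟪bhat k, bhat k⟫ = (1 : ℝ) := by
      rw [real_inner_self_eq_norm_sq, bhat.orthonormal.1 k]; norm_num
    rw [← h1, this]
    exact Finset.sum_congr rfl fun i _ => sq (c i)
  -- operator norm bound
  have hTle : ‖T (bhat k)‖ ≤ ‖T‖ := by
    have h := T.le_opNorm (bhat k)
    rw [bhat.orthonormal.1 k, mul_one] at h
    exact h
  have hT2 : ‖T (bhat k)‖ ^ 2 < ε₂ ^ 2 := by
    have h0 : ‖T (bhat k)‖ < ε₂ := lt_of_le_of_lt hTle hop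
    exact pow_lt_pow_left₀ h0 (norm_nonneg _) (by norm_num)
  -- gap bound: for i ≠ k, δ ≤ |lamhat k - lam i|
  have hgap' : ∀ i, i ≠ k → δ ^ 2 * c i ^ 2 ≤ ((lamhat k - lam i) * c i) ^ 2 := by
    intro i hik
    have h1 : 2 * δ ≤ |lam k - lam i| := hgap k i (Ne.symm hik)
    have h2 : |lamhat k - lam k| < δ := hmatch k
    have h3 : δ ≤ |lamhat k - lam i| := by
      have := abs_sub_abs_le_abs_sub (lam k - lam i) (lam k - lamhat k)
      have h4 : |lam k - lamhat k| = |lamhat k - lam k| := abs_sub_comm _ _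
      have h5 : lam k - lam i - (lam k - lamhat k) = lamhat k - lam i := by ring
      rw [h5, h4] at this
      linarith
    have h6 : δ ^ 2 ≤ (lamhat k - lam i) ^ 2 := by
      rw [← sq_abs (lamhat k - lam i)]
      exact pow_le_pow_left₀ hδ.le h3 2
    calc δ ^ 2 * c i ^ 2 ≤ (lamhat k - lam i) ^ 2 * c i ^ 2 :=
          mul_le_mul_of_nonneg_right h6 (sq_nonneg _)
      _ = ((lamhat k - lam i) * c i) ^ 2 := by ring
  -- δ² (1 - c k ²) < ε₂²
  have hkey : δ ^ 2 * (1 - c k ^ 2) < ε₂ ^ 2 := by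
    have hsum : ∑ i ∈ Finset.univ.erase k, c i ^ 2 = 1 - c k ^ 2 := by
      have h0 : c k ^ 2 + ∑ i ∈ Finset.univ.erase k, c i ^ 2 = 1 := by
        rw [← hparse]
        exact Finset.add_sum_erase Finset.univ (fun i => c i ^ 2) (Finset.mem_univ k)
      linarith
    have h1 : δ ^ 2 * (1 - c k ^ 2) ≤ ∑ i ∈ Finset.univ.erase k,
        ((lamhat k - lam i) * c i) ^ 2 := by
      rw [← hsum, Finset.mul_sum]
      exact Finset.sum_le_sum fun i hi => hgap' i (Finset.ne_of_mem_erase hi)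
    have h2 : ∑ i ∈ Finset.univ.erase k, ((lamhat k - lam i) * c i) ^ 2 ≤
        ∑ i, ((lamhat k - lam i) * c i) ^ 2 :=
      Finset.sum_le_sum_of_subset_of_nonneg (Finset.erase_subset _ _)
        (fun i _ _ => sq_nonneg _)
    rw [← hnormT] at h2
    linarith
  -- c k > √(1 - ε₂²/δ²)
  set s := Real.sqrt (1 - ε₂ ^ 2 / δ ^ 2) with hs
  have harg : 0 ≤ 1 - ε₂ ^ 2 / δ ^ 2 := by
    have h1 : ε₂ ^ 2 ≤ δ ^ 2 := by nlinarith
    have h2 : ε₂ ^ 2 / δ ^ 2 ≤ 1 := by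
      rw [div_le_one (by positivity)]; exact h1
    linarith
  have hck2 : s ^ 2 < c k ^ 2 := by
    have hδ2 : (0:ℝ) < δ ^ 2 := by positivity
    have he : δ ^ 2 * (1 - ε₂ ^ 2 / δ ^ 2) = δ ^ 2 - ε₂ ^ 2 := by field_simp
    have h2 : δ ^ 2 * (1 - ε₂ ^ 2 / δ ^ 2) < δ ^ 2 * c k ^ 2 := by
      rw [he]; nlinarith
    have h1 : 1 - ε₂ ^ 2 / δ ^ 2 < c k ^ 2 := lt_of_mul_lt_mul_left h2 hδ2.le
    rw [hs, Real.sq_sqrt harg]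
    exact h1
  have hcknn : 0 ≤ c k := by
    have := hsign k
    rwa [real_inner_comm] at this
  have hck : s < c k := by
    by_contra h
    push_neg at h
    have : c k ^ 2 ≤ s ^ 2 := pow_le_pow_left₀ hcknn h 2
    linarith
  have hs1 : s ≤ 1 := by
    have h0 : 1 - ε₂ ^ 2 / δ ^ 2 ≤ 1 := by
      have : 0 ≤ ε₂ ^ 2 / δ ^ 2 := by positivity
      linarith
    calc s ≤ Real.sqrt 1 := Real.sqrt_le_sqrt h0
      _ = 1 := Real.sqrt_one
  have hdist2 : ‖bhat k - b k‖ ^ 2 = 2 - 2 * c k := by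
    rw [← real_inner_self_eq_norm_sq, inner_sub_sub_self]
    have h1 : ⟪bhat k, bhat k⟫ = (1:ℝ) := by
      rw [real_inner_self_eq_norm_sq, bhat.orthonormal.1 k]; norm_num
    have h2 : ⟪b k, b k⟫ = (1:ℝ) := by
      rw [real_inner_self_eq_norm_sq, b.orthonormal.1 k]; norm_num
    have h3 : ⟪bhat k, b k⟫ = c k := real_inner_comm _ _
    rw [h1, h2, h3]; ring
  have hdist : ‖bhat k - b k‖ ≤ Real.sqrt 2 * Real.sqrt (1 - s) := by
    have h1 : ‖bhat k - b k‖ ^ 2 ≤ 2 * (1 - s) := by rw [hdist2]; linarith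
    have h2 : ‖bhat k - b k‖ = Real.sqrt (‖bhat k - b k‖ ^ 2) :=
      (Real.sqrt_sq (norm_nonneg _)).symm
    rw [h2, ← Real.sqrt_mul (by norm_num : (0:ℝ) ≤ 2)]
    exact Real.sqrt_le_sqrt h1
  -- final assembly
  have hsplit : ⟪μhat, bhat k⟫ - ⟪μ, b k⟫
      = ⟪μhat, bhat k - b k⟫ + (⟪μhat, b k⟫ - ⟪μ, b k⟫) := by
    rw [inner_sub_right]; ring
  have hCS : |⟪μhat, bhat k - b k⟫| ≤ ‖μhat‖ * (Real.sqrt 2 * Real.sqrt (1 - s)) := by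
    calc |⟪μhat, bhat k - b k⟫| ≤ ‖μhat‖ * ‖bhat k - b k‖ :=
          abs_real_inner_le_norm _ _
      _ ≤ ‖μhat‖ * (Real.sqrt 2 * Real.sqrt (1 - s)) :=
          mul_le_mul_of_nonneg_left hdist (norm_nonneg _)
  have hfac : ‖μhat‖ * (Real.sqrt 2 * Real.sqrt (1 - s))
      ≤ Real.sqrt 2 * (d + 1) * ‖μhat‖ * Real.sqrt (1 - s) := by
    have h1 : (1:ℝ) ≤ (d:ℝ) + 1 := by
      have := Nat.cast_nonneg (α := ℝ) d; linarith
    have h5 : (0:ℝ) ≤ Real.sqrt 2 * ‖μhat‖ * Real.sqrt (1 - s) := by positivity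
    calc ‖μhat‖ * (Real.sqrt 2 * Real.sqrt (1 - s))
        = Real.sqrt 2 * ‖μhat‖ * Real.sqrt (1 - s) * 1 := by ring
      _ ≤ Real.sqrt 2 * ‖μhat‖ * Real.sqrt (1 - s) * ((d:ℝ) + 1) :=
          mul_le_mul_of_nonneg_left h1 h5
      _ = Real.sqrt 2 * ((d:ℝ) + 1) * ‖μhat‖ * Real.sqrt (1 - s) := by ring
  calc |⟪μhat, bhat k⟫ - ⟪μ, b k⟫|
      ≤ |⟪μhat, bhat k - b k⟫| + |⟪μhat, b k⟫ - ⟪μ, b k⟫| := by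
        rw [hsplit]; exact abs_add_le _ _
    _ < Real.sqrt 2 * (d + 1) * ‖μhat‖ * Real.sqrt (1 - s) + ε₁ k := by
        have := hμ k
        linarith [hCS.trans hfac]
    _ = ε₁ k + Real.sqrt 2 * (d + 1) * ‖μhat‖ * Real.sqrt (1 - Real.sqrt (1 - ε₂ ^ 2 / δ ^ 2)) := by
        rw [hs]; ring
end
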